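/- Let n ≥ 2. Any family of pairwise orthogonal equi-n squares of order n has at most n+1 members: if f₁, …, f_k are equi-n squares such that for all i ≠ j and all distinct cells c ≠ c', f_i(c) = f_i(c') implies f_j(c) ≠ f_j(c'), then k ≤ n+1. -/

import Mathlib

/-- An equi-`n` square: every symbol occurs in exactly `n` cells. -/
def IsEquiNSquare (n : ℕ) (f : Fin n × Fin n → Fin n) : Prop :=
  ∀ a : Fin n, (Finset.univ.filter (fun c => f c = a)).card = n

/-- Two squares are orthogonal if whenever two distinct cells share a symbol in one,
they have distinct symbols in the other. -/
def OrthogonalSquares {n : ℕ} (f g : Fin n × Fin n → Fin n) : Prop :=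
  ∀ c c' : Fin n × Fin n, c ≠ c' → f c = f c' → g c ≠ g c'

/-- For `n ≥ 2`, any family of pairwise orthogonal equi-`n` squares of order `n`
has at most `n + 1` members. -/
theorem stmt_5 (n k : ℕ) (hn : 2 ≤ n) (f : Fin k → Fin n × Fin n → Fin n)
    (hequi : ∀ i, IsEquiNSquare n (f i))
    (horth : ∀ i j, i ≠ j → OrthogonalSquares (f i) (f j)) :
    k ≤ n + 1 := by
  classical
  set fib : Fin k → Fin n → Finset (Fin n × Fin n) :=
    fun i a => Finset.univ.filter (fun c => f i c = a) with hfib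
  set P : Fin k → Finset ((Fin n × Fin n) × (Fin n × Fin n)) :=
    fun i => Finset.univ.biUnion (fun a => (fib i a).offDiag) with hP
  have hmemfib : ∀ i a c, c ∈ fib i a ↔ f i c = a := by
    intro i a c; simp [hfib]
  have hmemP : ∀ i p, p ∈ P i ↔ p.1 ≠ p.2 ∧ f i p.1 = f i p.2 := by
    intro i p
    simp only [hP, Finset.mem_biUnion, Finset.mem_offDiag, hmemfib]
    constructor
    · rintro ⟨a, -, h1, h2, h3⟩; exact ⟨h3, h1.trans h2.symm⟩
    · rintro ⟨h1, h2⟩; exact ⟨f i p.1, Finset.mem_univ _, rfl, h2.symm, h1⟩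
  have hPcard : ∀ i, (P i).card = n * (n * n - n) := by
    intro i
    rw [hP, Finset.card_biUnion]
    · have : ∀ a : Fin n, (fib i a).offDiag.card = n * n - n := by
        intro a
        rw [Finset.offDiag_card, hequi i a]
      simp [this, Finset.sum_const, Finset.card_univ]
    · intro a _ b _ hab
      rw [Function.onFun_apply, Finset.disjoint_left]
      intro p hp hq
      rw [Finset.mem_offDiag] at hp hq
      exact hab (((hmemfib i a p.1).mp hp.1).symm.trans ((hmemfib i b p.1).mp hq.1))
  have hdisj : ∀ i ∈ (Finset.univ : Finset (Fin k)), ∀ j ∈ Finset.univ, i ≠ j →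
      Disjoint (P i) (P j) := by
    intro i _ j _ hij
    rw [Finset.disjoint_left]
    intro p hp hq
    rw [hmemP] at hp hq
    exact horth i j hij p.1 p.2 hp.1 hp.2 hq.2
  have hsub : (Finset.univ : Finset (Fin k)).biUnion P ⊆
      (Finset.univ : Finset ((Fin n × Fin n))).offDiag := by
    intro p hp
    rw [Finset.mem_biUnion] at hp
    obtain ⟨i, -, hp⟩ := hp
    rw [hmemP] at hp
    exact Finset.mem_offDiag.mpr ⟨Finset.mem_univ _, Finset.mem_univ _, hp.1⟩
  have hcard : k * (n * (n * n - n)) ≤ (n * n) * (n * n) - n * n := by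
    calc k * (n * (n * n - n))
        = ∑ i : Fin k, (P i).card := by
          simp [hPcard, Finset.sum_const, Finset.card_univ, mul_comm]
      _ = ((Finset.univ : Finset (Fin k)).biUnion P).card :=
          (Finset.card_biUnion hdisj).symm
      _ ≤ ((Finset.univ : Finset ((Fin n × Fin n))).offDiag).card :=
          Finset.card_le_card hsub
      _ = (n * n) * (n * n) - n * n := by
          rw [Finset.offDiag_card]; simp [Finset.card_univ]
  obtain ⟨m, rfl⟩ : ∃ m, n = m + 2 := ⟨n - 2, by omega⟩
  set A := (m + 2) * (m + 2) with hA
  have h1 : (m + 2) * ((m + 2) * (m + 2) - (m + 2)) = A * (m + 1) := by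
    have : (m + 2) * (m + 2) - (m + 2) = (m + 2) * (m + 1) := by
      have : (m + 2) * (m + 2) = (m + 2) * (m + 1) + (m + 2) := by ring
      omega
    rw [this, hA]; ring
  have h2 : A * A - A = (m + 3) * (A * (m + 1)) := by
    have hAe : A = (m + 1) * (m + 3) + 1 := by rw [hA]; ring
    have : A * A = (m + 3) * (A * (m + 1)) + A := by rw [hAe]; ring
    omega
  rw [h1] at hcard
  rw [h2] at hcard
  have hpos : 0 < A * (m + 1) := by positivity
  exact Nat.le_of_mul_le_mul_right hcard hpos
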